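/- If G is a regular graph, and H₁ and H₂ are A-cospectral graphs with equal adjacency coronals Γ_{A(H₁)}(x) = Γ_{A(H₂)}(x), then G∨̇H₁ and G∨̇H₂ are A-cospectral. -/

import Mathlib

open Matrix BigOperators Finset

attribute [local instance] Classical.propDecidable

/-- The coronal of a matrix `M`: `1ᵀ (xI − M)⁻¹ 1`. -/
noncomputable def coronal {n : Type*} [Fintype n] [DecidableEq n]
    (M : Matrix n n ℝ) (x : ℝ) : ℝ :=
  (fun _ => (1 : ℝ)) ⬝ᵥ ((x • (1 : Matrix n n ℝ) - M)⁻¹ *ᵥ fun _ => (1 : ℝ))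

/-- The adjacency matrix over ℝ (classical decidability). -/
noncomputable def adjM {V : Type*} (G : SimpleGraph V) : Matrix V V ℝ :=
  letI := Classical.decRel G.Adj
  G.adjMatrix ℝ

/-- The Laplacian matrix over ℝ. -/
noncomputable def lapM {V : Type*} [Fintype V] (G : SimpleGraph V) : Matrix V V ℝ :=
  letI := Classical.decRel G.Adj
  letI : DecidableEq V := Classical.decEq V
  G.lapMatrix ℝ

/-- The signless Laplacian matrix over ℝ. -/
noncomputable def signlessLapM {V : Type*} [Fintype V] (G : SimpleGraph V) : Matrix V V ℝ :=
  letI := Classical.decRel G.Adj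
  letI : DecidableEq V := Classical.decEq V
  G.degMatrix ℝ + G.adjMatrix ℝ

noncomputable instance edgeSetFintype {V : Type*} [Finite V] (G : SimpleGraph V) :
    Fintype G.edgeSet := Fintype.ofFinite _

/-- Subdivision-vertex join. -/
def svJoin {V₁ V₂ : Type*} (G₁ : SimpleGraph V₁) (G₂ : SimpleGraph V₂) :
    SimpleGraph (V₁ ⊕ (G₁.edgeSet ⊕ V₂)) where
  Adj a b :=
    match a, b with
    | Sum.inl v, Sum.inr (Sum.inl e) => v ∈ (e : Sym2 V₁)
    | Sum.inr (Sum.inl e), Sum.inl v => v ∈ (e : Sym2 V₁)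
    | Sum.inl _, Sum.inr (Sum.inr _) => True
    | Sum.inr (Sum.inr _), Sum.inl _ => True
    | Sum.inr (Sum.inr w), Sum.inr (Sum.inr w') => G₂.Adj w w'
    | _, _ => False
  symm := by
    constructor
    rintro (v | e | w) (v' | e' | w') h <;> simp_all <;> exact h.symm
  loopless := by
    constructor
    rintro (v | e | w) h <;> simp_all

/-- Subdivision-edge join. -/
def seJoin {V₁ V₂ : Type*} (G₁ : SimpleGraph V₁) (G₂ : SimpleGraph V₂) :
    SimpleGraph (V₁ ⊕ (G₁.edgeSet ⊕ V₂)) where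
  Adj a b :=
    match a, b with
    | Sum.inl v, Sum.inr (Sum.inl e) => v ∈ (e : Sym2 V₁)
    | Sum.inr (Sum.inl e), Sum.inl v => v ∈ (e : Sym2 V₁)
    | Sum.inr (Sum.inl _), Sum.inr (Sum.inr _) => True
    | Sum.inr (Sum.inr _), Sum.inr (Sum.inl _) => True
    | Sum.inr (Sum.inr w), Sum.inr (Sum.inr w') => G₂.Adj w w'
    | _, _ => False
  symm := by
    constructor
    rintro (v | e | w) (v' | e' | w') h <;> simp_all <;> exact h.symm
  loopless := by
    constructor
    rintro (v | e | w) h <;> simp_all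

/-- Number of spanning trees of a graph. -/
noncomputable def spanningTreeCount {V : Type*} (G : SimpleGraph V) : ℕ :=
  Nat.card {H : G.Subgraph // H.IsSpanning ∧ H.coe.IsTree}


section AuxSVJoin

open Polynomial in
lemma eval_charpoly' {n : Type*} [Fintype n] [DecidableEq n] (M : Matrix n n ℝ) (x : ℝ) :
    (M.charpoly).eval x = (x • (1 : Matrix n n ℝ) - M).det := by
  rw [Matrix.charpoly, eval_det, matPolyEquiv_charmatrix]
  congr 1
  simp [smul_eq_diagonal_mul, Matrix.scalar]

noncomputable def Pm (n : ℕ) (G : SimpleGraph (Fin n)) (x : ℝ) :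
    Matrix (Fin n ⊕ G.edgeSet) (Fin n ⊕ G.edgeSet) ℝ :=
  x • (1 : Matrix (Fin n ⊕ G.edgeSet) (Fin n ⊕ G.edgeSet) ℝ) - Matrix.of (fun a b => match a, b with
    | Sum.inl v, Sum.inr e => if v ∈ e.val then (1:ℝ) else 0
    | Sum.inr e, Sum.inl v => if v ∈ e.val then (1:ℝ) else 0
    | _, _ => 0)

def Cm (n : ℕ) (G : SimpleGraph (Fin n)) :
    Matrix (Fin n ⊕ G.edgeSet) (Fin n ⊕ G.edgeSet) ℝ :=
  Matrix.of fun a b => match a, b with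
    | Sum.inl _, Sum.inl _ => (1:ℝ)
    | _, _ => 0

def Qm (n : ℕ) (G : SimpleGraph (Fin n)) (n₂ : ℕ) :
    Matrix (Fin n ⊕ G.edgeSet) (Fin n₂) ℝ :=
  Matrix.of fun a _ => match a with
    | Sum.inl _ => (-1:ℝ)
    | _ => 0

def Qt (n : ℕ) (G : SimpleGraph (Fin n)) (n₂ : ℕ) :
    Matrix (Fin n₂) (Fin n ⊕ G.edgeSet) ℝ :=
  Matrix.of fun _ a => match a with
    | Sum.inl _ => (-1:ℝ)
    | _ => 0

lemma svJoin_det_key (n n₂ : ℕ) (G : SimpleGraph (Fin n)) (H : SimpleGraph (Fin n₂)) (x : ℝ)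
    (hD : IsUnit (x • (1 : Matrix (Fin n₂) (Fin n₂) ℝ) - adjM H).det) :
    (x • (1 : Matrix _ _ ℝ) - adjM (svJoin G H)).det
      = (x • (1 : Matrix (Fin n₂) (Fin n₂) ℝ) - adjM H).det
        * (Pm n G x - coronal (adjM H) x • Cm n G).det := by
  classical
  set D := x • (1 : Matrix (Fin n₂) (Fin n₂) ℝ) - adjM H with hDdef
  have hInv : Invertible D := D.invertibleOfIsUnitDet hD
  have hre : (x • (1 : Matrix _ _ ℝ) - adjM (svJoin G H)).det
      = (fromBlocks (Pm n G x) (Qm n G n₂) (Qt n G n₂) D).det := by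
    rw [← Matrix.det_submatrix_equiv_self (Equiv.sumAssoc (Fin n) G.edgeSet (Fin n₂))]
    congr 1
    ext a b
    rcases a with (v|e)|w <;> rcases b with (v'|e')|w' <;>
      simp only [adjM, Matrix.submatrix_apply, Matrix.sub_apply, SimpleGraph.adjMatrix_apply] <;>
      simp [Pm, Qm, Qt, fromBlocks, adjM, svJoin, Matrix.one_apply, Equiv.sumAssoc, hDdef,
        Sum.inl.injEq, sub_eq_iff_eq_add]
    all_goals (split_ifs <;> simp_all)
  rw [hre, Matrix.det_fromBlocks₂₂, invOf_eq_nonsing_inv]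
  congr 2
  have hQ : Qm n G n₂ * D⁻¹ * Qt n G n₂ = coronal (adjM H) x • Cm n G := by
    ext a b
    rcases a with v|e <;> rcases b with v'|e' <;>
      simp [Matrix.mul_apply, Qm, Qt, Cm, coronal, dotProduct, Matrix.mulVec, ← hDdef,
        Finset.mul_sum, Finset.sum_mul]
    · exact Finset.sum_comm
  rw [hQ]

end AuxSVJoin

/-- If `G` is regular and `H₁, H₂` are `A`-cospectral with equal adjacency coronals,
then `G ∨̇ H₁` and `G ∨̇ H₂` are `A`-cospectral. -/
theorem svJoin_A_cospectral_right (n n₂ r : ℕ) (G : SimpleGraph (Fin n))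
    (hreg : G.IsRegularOfDegree r)
    (H₁ H₂ : SimpleGraph (Fin n₂))
    (hcosp : (adjM H₁).charpoly = (adjM H₂).charpoly)
    (hcor : ∀ x : ℝ, coronal (adjM H₁) x = coronal (adjM H₂) x) :
    (adjM (svJoin G H₁)).charpoly = (adjM (svJoin G H₂)).charpoly := by
  classical
  apply Polynomial.eq_of_infinite_eval_eq
  have hne : (adjM H₁).charpoly ≠ 0 := ((adjM H₁).charpoly_monic).ne_zero
  have hfin : Set.Finite {x : ℝ | ((adjM H₁).charpoly).eval x = 0} :=
    Polynomial.finite_setOf_isRoot hne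
  have hinf : Set.Infinite {x : ℝ | ((adjM H₁).charpoly).eval x = 0}ᶜ :=
    hfin.infinite_compl
  refine hinf.mono ?_
  intro x hx
  simp only [Set.mem_compl_iff, Set.mem_setOf_eq] at hx
  have h1 : ((adjM H₁).charpoly).eval x = (x • (1 : Matrix (Fin n₂) (Fin n₂) ℝ) - adjM H₁).det :=
    eval_charpoly' _ _
  have h2 : ((adjM H₂).charpoly).eval x = (x • (1 : Matrix (Fin n₂) (Fin n₂) ℝ) - adjM H₂).det :=
    eval_charpoly' _ _
  have hdets : (x • (1 : Matrix (Fin n₂) (Fin n₂) ℝ) - adjM H₁).det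
      = (x • (1 : Matrix (Fin n₂) (Fin n₂) ℝ) - adjM H₂).det := by
    rw [← h1, ← h2, hcosp]
  have hD1 : IsUnit (x • (1 : Matrix (Fin n₂) (Fin n₂) ℝ) - adjM H₁).det :=
    isUnit_iff_ne_zero.2 (by rw [← h1]; exact hx)
  have hD2 : IsUnit (x • (1 : Matrix (Fin n₂) (Fin n₂) ℝ) - adjM H₂).det := hdets ▸ hD1
  show Polynomial.eval x _ = Polynomial.eval x _
  rw [eval_charpoly', eval_charpoly', svJoin_det_key n n₂ G H₁ x hD1,
    svJoin_det_key n n₂ G H₂ x hD2, hdets, hcor x]
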